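/- arXiv:2007.13728 — 4 statements merged into one kernel-verified Lean document; each statement's English description precedes it below -/
import Mathlib

section
/- For every α ≥ 1, n ≥ 1, q ∈ [0,1), and every m ∈ [n], one has μ_α(n,q) ≤ n(1-q)^α + α·m·(1-q)^α·q^m·(1-q^n)/(1-q^m)^{α+1} + (m(1-q)/(1-q^m))^α · Σ_{1 < k ≤ m} 1/k^α. -/
open Finset

private lemma geom_upper (q : ℝ) (hq1 : 0 ≤ q) (m : ℕ) :
    1 - q ^ m ≤ (m : ℝ) * (1 - q) := by
  have h := one_add_mul_le_pow (a := q - 1) (by linarith) m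
  have h2 : (1 : ℝ) + (q - 1) = q := by ring
  rw [h2] at h
  linarith

private lemma key_low (q : ℝ) (hq0 : 0 ≤ q) (hq1 : q ≤ 1) {k m : ℕ} (hkm : k ≤ m) :
    (k : ℝ) * (1 - q ^ m) ≤ (m : ℝ) * (1 - q ^ k) := by
  have hGm : (1 - q) * ∑ i ∈ Finset.range m, q ^ i = 1 - q ^ m := by
    have := geom_sum_mul q m
    nlinarith [this]
  have hGk : (1 - q) * ∑ i ∈ Finset.range k, q ^ i = 1 - q ^ k := by
    have := geom_sum_mul q k
    nlinarith [this]
  have hsplit : (∑ i ∈ Finset.Ico 0 k, q ^ i) + ∑ i ∈ Finset.Ico k m, q ^ i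
      = ∑ i ∈ Finset.Ico 0 m, q ^ i := Finset.sum_Ico_consecutive _ (Nat.zero_le k) hkm
  rw [← Finset.range_eq_Ico, ← Finset.range_eq_Ico] at hsplit
  have hT : ∑ i ∈ Finset.Ico k m, q ^ i ≤ ((m - k : ℕ) : ℝ) * q ^ k := by
    calc ∑ i ∈ Finset.Ico k m, q ^ i ≤ ∑ _i ∈ Finset.Ico k m, q ^ k := by
          apply Finset.sum_le_sum
          intro i hi
          exact pow_le_pow_of_le_one hq0 hq1 (Finset.mem_Ico.mp hi).1
      _ = ((m - k : ℕ) : ℝ) * q ^ k := by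
          rw [Finset.sum_const, Nat.card_Ico, nsmul_eq_mul]
  have hGkq : (k : ℝ) * q ^ k ≤ ∑ i ∈ Finset.range k, q ^ i := by
    calc (k : ℝ) * q ^ k = ∑ _i ∈ Finset.range k, q ^ k := by
          rw [Finset.sum_const, Finset.card_range, nsmul_eq_mul]
      _ ≤ ∑ i ∈ Finset.range k, q ^ i := by
          apply Finset.sum_le_sum
          intro i hi
          exact pow_le_pow_of_le_one hq0 hq1 (Finset.mem_range.mp hi).le
  set Gk := ∑ i ∈ Finset.range k, q ^ i with hGkdef
  set T := ∑ i ∈ Finset.Ico k m, q ^ i with hTdef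
  have hcast : ((m - k : ℕ) : ℝ) = (m : ℝ) - (k : ℝ) := by
    rw [Nat.cast_sub hkm]
  rw [hcast] at hT
  have hk0 : (0 : ℝ) ≤ (k : ℝ) := Nat.cast_nonneg k
  have hmk0 : (0 : ℝ) ≤ (m : ℝ) - (k : ℝ) := by
    have := Nat.cast_le (α := ℝ).mpr hkm
    linarith
  have key : (k : ℝ) * (Gk + T) ≤ (m : ℝ) * Gk := by
    nlinarith [mul_le_mul_of_nonneg_left hT hk0, mul_le_mul_of_nonneg_left hGkq hmk0]
  have h1q : (0 : ℝ) ≤ 1 - q := by linarith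
  have hfin := mul_le_mul_of_nonneg_left key h1q
  have e1 : 1 - q ^ m = (1 - q) * (Gk + T) := by
    rw [← hGm, ← hsplit]
  have e2 : 1 - q ^ k = (1 - q) * Gk := hGk.symm
  rw [e1, e2]
  nlinarith [hfin]

private lemma tele_sum (q : ℝ) (m : ℕ) :
    ∀ n, m ≤ n → (∑ k ∈ Finset.Ioc m n, q ^ (k - 1) * (1 - q)) = q ^ m - q ^ n := by
  intro n hn
  induction n, hn using Nat.le_induction with
  | base => simp
  | succ n hn ih =>
    rw [Finset.sum_Ioc_succ_top (by omega), ih, Nat.add_sub_cancel, pow_succ]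
    ring

/-- Upper bound on `μ_α(n,q) = Σ_{1<k≤n} ((1-q)/(1-qᵏ))^α`: for any `m ∈ [n]`,
`μ_α(n,q) ≤ n(1-q)^α + α m (1-q)^α qᵐ (1-qⁿ)/(1-qᵐ)^{α+1}
  + (m(1-q)/(1-qᵐ))^α Σ_{1<k≤m} 1/k^α`. -/
theorem mu_alpha_upper_bound
    (α : ℝ) (hα : 1 ≤ α) (n : ℕ) (hn : 1 ≤ n) (q : ℝ)
    (hq : q ∈ Set.Ico (0 : ℝ) 1) (m : ℕ) (hm : m ∈ Finset.Icc 1 n) :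
    ∑ k ∈ Finset.Icc 2 n, ((1 - q) / (1 - q ^ k)) ^ α
      ≤ (n : ℝ) * (1 - q) ^ α
        + α * m * (1 - q) ^ α * q ^ m * (1 - q ^ n) / (1 - q ^ m) ^ (α + 1)
        + ((m : ℝ) * (1 - q) / (1 - q ^ m)) ^ α
            * ∑ k ∈ Finset.Icc 2 m, (1 / (k : ℝ)) ^ α := by
  obtain ⟨hq0, hq1⟩ := hq
  rw [Finset.mem_Icc] at hm
  obtain ⟨hm1, hmn⟩ := hm
  have h1q : 0 < 1 - q := by linarith
  have hpow_lt : ∀ j : ℕ, 1 ≤ j → q ^ j < 1 := fun j hj =>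
    pow_lt_one₀ hq0 hq1 (by omega)
  have h1qm : 0 < 1 - q ^ m := by
    have := hpow_lt m hm1; linarith
  have h1qmle : 1 - q ^ m ≤ (m : ℝ) * (1 - q) := geom_upper q hq0 m
  have hA1 : (0 : ℝ) ≤ (1 - q) ^ α := Real.rpow_nonneg h1q.le α
  have hQm1 : 0 < (1 - q ^ m) ^ (α + 1) := Real.rpow_pos_of_pos h1qm (α + 1)
  have hαpos : (0 : ℝ) < α := by linarith
  have hC : 0 ≤ α * (m : ℝ) * (1 - q) ^ α / (1 - q ^ m) ^ (α + 1) := by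
    apply div_nonneg _ hQm1.le
    have : (0 : ℝ) ≤ (m : ℝ) := Nat.cast_nonneg m
    positivity
  have hIcc : Finset.Icc 2 n = Finset.Ioc 1 n := Finset.Icc_add_one_left_eq_Ioc 1 n
  rw [hIcc, ← Finset.sum_Ioc_consecutive _ hm1 hmn]
  -- lower part
  have hlow : ∑ k ∈ Finset.Ioc 1 m, ((1 - q) / (1 - q ^ k)) ^ α
      ≤ ((m : ℝ) * (1 - q) / (1 - q ^ m)) ^ α * ∑ k ∈ Finset.Icc 2 m, (1 / (k : ℝ)) ^ α := by
    rw [Finset.mul_sum, show Finset.Icc 2 m = Finset.Ioc 1 m from Finset.Icc_add_one_left_eq_Ioc 1 m]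
    apply Finset.sum_le_sum
    intro k hk
    obtain ⟨hk1, hkm⟩ := Finset.mem_Ioc.mp hk
    have h1qk : 0 < 1 - q ^ k := by
      have := hpow_lt k (by omega); linarith
    have hkpos : (0 : ℝ) < (k : ℝ) := Nat.cast_pos.mpr (by omega)
    have hkey := key_low q hq0 hq1.le hkm
    have hbase : (1 - q) / (1 - q ^ k) ≤ (m : ℝ) * (1 - q) / (1 - q ^ m) * (1 / (k : ℝ)) := by
      rw [div_mul_div_comm, mul_one]
      rw [div_le_div_iff₀ h1qk (by positivity)]
      nlinarith [mul_le_mul_of_nonneg_left hkey h1q.le]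
    calc ((1 - q) / (1 - q ^ k)) ^ α
        ≤ ((m : ℝ) * (1 - q) / (1 - q ^ m) * (1 / (k : ℝ))) ^ α := by
          apply Real.rpow_le_rpow (by positivity) hbase (by linarith)
      _ = ((m : ℝ) * (1 - q) / (1 - q ^ m)) ^ α * (1 / (k : ℝ)) ^ α := by
          apply Real.mul_rpow
          · apply div_nonneg _ h1qm.le
            positivity
          · positivity
  -- upper part
  have hhigh : ∑ k ∈ Finset.Ioc m n, ((1 - q) / (1 - q ^ k)) ^ α
      ≤ ∑ k ∈ Finset.Ioc m n, ((1 - q) ^ α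
          + α * (m : ℝ) * (1 - q) ^ α / (1 - q ^ m) ^ (α + 1) * (q ^ (k - 1) * (1 - q))) := by
    apply Finset.sum_le_sum
    intro k hk
    obtain ⟨hmk, hkn⟩ := Finset.mem_Ioc.mp hk
    have hk1 : 1 ≤ k := by omega
    have h1qk : 0 < 1 - q ^ k := by
      have := hpow_lt k hk1; linarith
    have hqkm : q ^ k ≤ q ^ m := pow_le_pow_of_le_one hq0 hq1.le hmk.le
    have hQm : 0 < (1 - q ^ m) ^ α := Real.rpow_pos_of_pos h1qm α
    have hP : 0 < (1 - q ^ k) ^ α := Real.rpow_pos_of_pos h1qk α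
    have hQmP : (1 - q ^ m) ^ α ≤ (1 - q ^ k) ^ α :=
      Real.rpow_le_rpow h1qm.le (by linarith) (by linarith)
    have hbern : 1 - α * q ^ k ≤ (1 - q ^ k) ^ α := by
      have hs : (-1 : ℝ) ≤ -(q ^ k) := by
        have : q ^ k ≤ 1 := pow_le_one₀ hq0 hq1.le
        linarith
      have h := one_add_mul_self_le_rpow_one_add hs hα
      have he : (1 : ℝ) + -(q ^ k) = 1 - q ^ k := by ring
      rw [he] at h
      linarith
    have hqk : q ^ k = q ^ (k - 1) * q := by
      rw [← pow_succ]
      congr 1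
      omega
    have hQm1eq : (1 - q ^ m) ^ (α + 1) = (1 - q ^ m) ^ α * (1 - q ^ m) :=
      Real.rpow_add_one h1qm.ne' α
    have hqk1 : (0 : ℝ) ≤ q ^ (k - 1) := pow_nonneg hq0 _
    have h2 : q * (1 - q ^ m) ≤ (m : ℝ) * (1 - q) := by
      nlinarith
    have h3 : (1 - q ^ m) ^ α * (q * (1 - q ^ m)) ≤ (1 - q ^ k) ^ α * ((m : ℝ) * (1 - q)) := by
      apply mul_le_mul hQmP h2 (by positivity) hP.le
    have h4 : (α * q ^ (k - 1)) * ((1 - q ^ m) ^ α * (q * (1 - q ^ m)))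
        ≤ (α * q ^ (k - 1)) * ((1 - q ^ k) ^ α * ((m : ℝ) * (1 - q))) := by
      apply mul_le_mul_of_nonneg_left h3 (by positivity)
    have hstep : α * q ^ k / (1 - q ^ k) ^ α
        ≤ α * (m : ℝ) * q ^ (k - 1) * (1 - q) / (1 - q ^ m) ^ (α + 1) := by
      rw [div_le_div_iff₀ hP hQm1]
      calc α * q ^ k * (1 - q ^ m) ^ (α + 1)
          = (α * q ^ (k - 1)) * ((1 - q ^ m) ^ α * (q * (1 - q ^ m))) := by
            rw [hQm1eq, hqk]; ring
        _ ≤ (α * q ^ (k - 1)) * ((1 - q ^ k) ^ α * ((m : ℝ) * (1 - q))) := h4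
        _ = α * (m : ℝ) * q ^ (k - 1) * (1 - q) * (1 - q ^ k) ^ α := by ring
    have hfrac : 1 / (1 - q ^ k) ^ α
        ≤ 1 + α * (m : ℝ) * q ^ (k - 1) * (1 - q) / (1 - q ^ m) ^ (α + 1) := by
      have hinv : 1 / (1 - q ^ k) ^ α = 1 + (1 - (1 - q ^ k) ^ α) / (1 - q ^ k) ^ α := by
        field_simp
        ring
      have h5 : (1 - (1 - q ^ k) ^ α) / (1 - q ^ k) ^ α ≤ α * q ^ k / (1 - q ^ k) ^ α := by
        gcongr
        linarith
      linarith
    calc ((1 - q) / (1 - q ^ k)) ^ α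
        = (1 - q) ^ α * (1 / (1 - q ^ k) ^ α) := by
          rw [Real.div_rpow h1q.le h1qk.le]; ring
      _ ≤ (1 - q) ^ α * (1 + α * (m : ℝ) * q ^ (k - 1) * (1 - q) / (1 - q ^ m) ^ (α + 1)) :=
          mul_le_mul_of_nonneg_left hfrac hA1
      _ = (1 - q) ^ α
          + α * (m : ℝ) * (1 - q) ^ α / (1 - q ^ m) ^ (α + 1) * (q ^ (k - 1) * (1 - q)) := by
          ring
  have hsum2 : ∑ k ∈ Finset.Ioc m n, ((1 - q) ^ α
        + α * (m : ℝ) * (1 - q) ^ α / (1 - q ^ m) ^ (α + 1) * (q ^ (k - 1) * (1 - q)))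
      = ((n - m : ℕ) : ℝ) * (1 - q) ^ α
        + α * (m : ℝ) * (1 - q) ^ α / (1 - q ^ m) ^ (α + 1) * (q ^ m - q ^ n) := by
    rw [Finset.sum_add_distrib, Finset.sum_const, Nat.card_Ioc, ← Finset.mul_sum,
      tele_sum q m n hmn, nsmul_eq_mul]
  have hfin1 : ((n - m : ℕ) : ℝ) * (1 - q) ^ α ≤ (n : ℝ) * (1 - q) ^ α := by
    apply mul_le_mul_of_nonneg_right _ hA1
    exact_mod_cast Nat.sub_le n m
  have hfin2 : α * (m : ℝ) * (1 - q) ^ α / (1 - q ^ m) ^ (α + 1) * (q ^ m - q ^ n)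
      ≤ α * (m : ℝ) * (1 - q) ^ α / (1 - q ^ m) ^ (α + 1) * (q ^ m * (1 - q ^ n)) := by
    apply mul_le_mul_of_nonneg_left _ hC
    nlinarith [pow_nonneg hq0 n, pow_le_one₀ hq0 hq1.le (n := m)]
  have hCeq : α * (m : ℝ) * (1 - q) ^ α / (1 - q ^ m) ^ (α + 1) * (q ^ m * (1 - q ^ n))
      = α * m * (1 - q) ^ α * q ^ m * (1 - q ^ n) / (1 - q ^ m) ^ (α + 1) := by
    ring
  linarith [hlow, hhigh, hsum2, hfin1, hfin2]
end

section
/- For every integer m ≥ 1, the function φ(x) = (1-x)·x^m/(1-x^m) is increasing on [0,1) and satisfies φ(x) ≤ 1/m for all x ∈ [0,1). -/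
private lemma S_ge_one {m : ℕ} (hm : 1 ≤ m) {x : ℝ} (hx : 0 ≤ x) :
    (1 : ℝ) ≤ ∑ i ∈ Finset.range m, x ^ i := by
  have h0 : (0 : ℕ) ∈ Finset.range m := Finset.mem_range.mpr hm
  calc (1 : ℝ) = x ^ 0 := by simp
    _ ≤ ∑ i ∈ Finset.range m, x ^ i :=
      Finset.single_le_sum (fun i _ => pow_nonneg hx i) h0

private lemma phi_eq {m : ℕ} {x : ℝ} (hx : x ∈ Set.Ico (0 : ℝ) 1) :
    (1 - x) * x ^ m / (1 - x ^ m) = x ^ m / ∑ i ∈ Finset.range m, x ^ i := by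
  have hfac : (1 - x) * ∑ i ∈ Finset.range m, x ^ i = 1 - x ^ m := by
    have := geom_sum_mul x m
    nlinarith [this]
  have hx1 : (1 : ℝ) - x ≠ 0 := by have := hx.2; intro h; nlinarith
  rw [← hfac, mul_div_mul_left _ _ hx1]

/-- For an integer `m ≥ 1`, `φ(x) = (1-x)xᵐ/(1-xᵐ)` is increasing on `[0,1)`
and bounded above by `1/m` there. -/
theorem phi_m_strictMonoOn_and_le
    (m : ℕ) (hm : 1 ≤ m) :
    StrictMonoOn (fun x : ℝ => (1 - x) * x ^ m / (1 - x ^ m)) (Set.Ico 0 1) ∧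
    ∀ x ∈ Set.Ico (0 : ℝ) 1, (1 - x) * x ^ m / (1 - x ^ m) ≤ 1 / m := by
  constructor
  · intro x hx y hy hxy
    simp only
    rw [phi_eq hx, phi_eq hy]
    have hSx : (0:ℝ) < ∑ i ∈ Finset.range m, x ^ i :=
      lt_of_lt_of_le one_pos (S_ge_one hm hx.1)
    have hSy : (0:ℝ) < ∑ i ∈ Finset.range m, y ^ i :=
      lt_of_lt_of_le one_pos (S_ge_one hm hy.1)
    rw [div_lt_div_iff₀ hSx hSy]
    rw [Finset.mul_sum, Finset.mul_sum]
    apply Finset.sum_lt_sum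
    · intro i hi
      have him : i ≤ m := (Finset.mem_range.mp hi).le
      have h1 : x ^ m * y ^ i = x ^ (m - i) * (x ^ i * y ^ i) := by
        rw [← mul_assoc, ← pow_add, Nat.sub_add_cancel him]
      have h2 : y ^ m * x ^ i = y ^ (m - i) * (x ^ i * y ^ i) := by
        rw [show y ^ (m-i) * (x^i * y^i) = y^(m-i) * y^i * x^i by ring,
          ← pow_add, Nat.sub_add_cancel him]
      rw [h1, h2]
      exact mul_le_mul_of_nonneg_right (pow_le_pow_left₀ hx.1 hxy.le _)
        (mul_nonneg (pow_nonneg hx.1 i) (pow_nonneg hy.1 i))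
    · refine ⟨0, Finset.mem_range.mpr hm, ?_⟩
      simp only [pow_zero, mul_one]
      exact pow_lt_pow_left₀ hxy hx.1 (by omega)
  · intro x hx
    rw [phi_eq hx]
    have hSx : (0:ℝ) < ∑ i ∈ Finset.range m, x ^ i :=
      lt_of_lt_of_le one_pos (S_ge_one hm hx.1)
    have hmpos : (0:ℝ) < (m:ℝ) := by exact_mod_cast hm
    rw [div_le_div_iff₀ hSx hmpos, one_mul]
    calc x ^ m * m = ∑ _i ∈ Finset.range m, x ^ m := by
          rw [Finset.sum_const, Finset.card_range, nsmul_eq_mul, mul_comm]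
      _ ≤ ∑ i ∈ Finset.range m, x ^ i :=
          Finset.sum_le_sum fun i hi =>
            pow_le_pow_of_le_one hx.1 hx.2.le (Finset.mem_range.mp hi).le
end

section
/- Let q ∈ [0,1), n ≥ 1, s ≥ 0 be given, and let N(n,s) be the random variable with P(N(n,s) = ℓ) = q^{(s-n)ℓ + ℓ(ℓ+1)/2} · (∏_{i=s+1-n+ℓ}^{s} (1-q^i)) · Σ_{A ⊆ [n], |A| = ℓ} q^{Σ_{a∈A}(a-1)}. This family satisfies the recursion P(N(n,s) = ℓ) = (1-q^s)·P(N(n-1,s-1) = ℓ) + q^s·P(N(n-1,s) = ℓ-1) for all n, s ≥ 1, with P(N(0,s)=ℓ) = 1 if ℓ=0 and 0 otherwise. -/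
open Finset

/-- The explicit probability mass function of the threshold process:
`p(n,s,ℓ) = q^{(s-n)ℓ + ℓ(ℓ+1)/2} · Π_{i=s+1-n+ℓ}^{s} (1-qⁱ)
  · Σ_{A ⊆ [n], |A| = ℓ} q^{Σ_{a∈A}(a-1)}`. -/
noncomputable def thresholdPMF (q : ℝ) (n s ℓ : ℕ) : ℝ :=
  q ^ (((s : ℤ) - n) * ℓ + (ℓ * (ℓ + 1) / 2 : ℕ)) *
    (∏ i ∈ Finset.Icc ((s : ℤ) + 1 - n + ℓ) (s : ℤ), (1 - q ^ i)) *
    ∑ A ∈ Finset.powersetCard ℓ (Finset.Icc 1 n), q ^ (∑ a ∈ A, (a - 1))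

/-- Pascal-type recursion for the subset generating sum, obtained by splitting on
whether the largest element `m+1` belongs to the subset. -/
lemma pascal_sum (q : ℝ) (m ℓ : ℕ) :
    ∑ A ∈ Finset.powersetCard (ℓ + 1) (Finset.Icc 1 (m + 1)), q ^ (∑ a ∈ A, (a - 1)) =
      (∑ A ∈ Finset.powersetCard (ℓ + 1) (Finset.Icc 1 m), q ^ (∑ a ∈ A, (a - 1))) +
        q ^ m * ∑ A ∈ Finset.powersetCard ℓ (Finset.Icc 1 m), q ^ (∑ a ∈ A, (a - 1)) := by
  have hnot : (m + 1) ∉ Finset.Icc 1 m := by simp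
  have hins : Finset.Icc 1 (m + 1) = insert (m + 1) (Finset.Icc 1 m) := by
    ext x; simp only [Finset.mem_Icc, Finset.mem_insert]; omega
  rw [hins, Finset.powersetCard_succ_insert hnot]
  rw [Finset.sum_union]
  · congr 1
    rw [Finset.sum_image]
    · rw [Finset.mul_sum]
      refine Finset.sum_congr rfl fun A hA => ?_
      have hAsub : A ⊆ Finset.Icc 1 m := (Finset.mem_powersetCard.mp hA).1
      have hnA : (m + 1) ∉ A := fun hmem => hnot (hAsub hmem)
      rw [Finset.sum_insert hnA, Nat.add_sub_cancel, pow_add]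
    · intro A hA B hB hAB
      have hnA : (m + 1) ∉ A := fun h => hnot ((Finset.mem_powersetCard.mp hA).1 h)
      have hnB : (m + 1) ∉ B := fun h => hnot ((Finset.mem_powersetCard.mp hB).1 h)
      have := congrArg (fun S => Finset.erase S (m + 1)) hAB
      simpa [Finset.erase_insert, hnA, hnB] using this
  · rw [Finset.disjoint_left]
    intro A hA hA'
    obtain ⟨B, hB, rfl⟩ := Finset.mem_image.mp hA'
    exact hnot ((Finset.mem_powersetCard.mp hA).1 (Finset.mem_insert_self (m + 1) B))

/-- The subset generating sum vanishes when `ℓ` exceeds the size of the ground set. -/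
lemma powerset_sum_zero (q : ℝ) (n ℓ : ℕ) (h : n < ℓ) :
    ∑ A ∈ Finset.powersetCard ℓ (Finset.Icc 1 n), q ^ (∑ a ∈ A, (a - 1)) = 0 := by
  rw [Finset.powersetCard_eq_empty.mpr, Finset.sum_empty]
  simpa using h

/-- Triangular number step, in `ℤ`. -/
lemma hT_int (k : ℕ) :
    ((k:ℤ) + 1) * ((k:ℤ) + 1 + 1) / 2 = (k:ℤ) * ((k:ℤ) + 1) / 2 + ((k:ℤ) + 1) := by
  have h2 : ((k:ℤ) + 1) * ((k:ℤ) + 1 + 1) = (k:ℤ) * ((k:ℤ) + 1) + ((k:ℤ) + 1) * 2 := by ring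
  rw [h2, Int.add_mul_ediv_right _ _ (by norm_num : (2:ℤ) ≠ 0)]

/-- The key exponent recombination identity, valid also at `q = 0`. -/
lemma exp_combine' (q : ℝ) (m t k : ℕ) :
    q ^ (t + 1) * q ^ (((t:ℤ) + 1 - ↑m) * ↑k + ↑k * (↑k + 1) / 2) =
      q ^ m * q ^ (((t:ℤ) - ↑m) * (↑k + 1) + ((k:ℤ) + 1) * ((k:ℤ) + 1 + 1) / 2) := by
  have hD0 : (0:ℤ) ≤ (k:ℤ) * ((k:ℤ) + 1) / 2 :=
    Int.ediv_nonneg (by positivity) (by norm_num)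
  by_cases hq : q = 0
  · subst hq
    rw [zero_pow (Nat.succ_ne_zero t), zero_mul]
    rcases Nat.eq_zero_or_pos m with hm | hm
    · subst hm
      have h1 : (0:ℤ) ≤ ((t:ℤ) - ↑(0:ℕ)) * ((k:ℤ) + 1) := by
        apply mul_nonneg
        · simp
        · positivity
      have hX : ((t:ℤ) - ↑(0:ℕ)) * ((k:ℤ) + 1) + ((k:ℤ) + 1) * ((k:ℤ) + 1 + 1) / 2 ≠ 0 := by
        rw [hT_int]; omega
      rw [pow_zero, one_mul, zero_zpow _ hX]
    · rw [zero_pow hm.ne', zero_mul]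
  · rw [← zpow_natCast q (t + 1), ← zpow_natCast q m, ← zpow_add₀ hq, ← zpow_add₀ hq]
    congr 1
    rw [hT_int]
    push_cast
    ring

/-- The explicit formula satisfies the threshold-process recursion
`p(n,s,ℓ) = (1-qˢ) p(n-1,s-1,ℓ) + qˢ p(n-1,s,ℓ-1)` for `n, s ≥ 1`
(with the second term vanishing when `ℓ = 0`), together with the base case
`p(0,s,ℓ) = 1_{ℓ=0}`. -/
theorem thresholdPMF_recursion (q : ℝ) (hq : q ∈ Set.Ico (0 : ℝ) 1) :
    (∀ s ℓ : ℕ, thresholdPMF q 0 s ℓ = if ℓ = 0 then 1 else 0) ∧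
    ∀ n s : ℕ, 1 ≤ n → 1 ≤ s → ∀ ℓ : ℕ,
      thresholdPMF q n s ℓ
        = (1 - q ^ s) * thresholdPMF q (n - 1) (s - 1) ℓ
          + q ^ s * (if ℓ = 0 then 0 else thresholdPMF q (n - 1) s (ℓ - 1)) := by
  constructor
  · -- base case `n = 0`
    intro s ℓ
    unfold thresholdPMF
    rcases Nat.eq_zero_or_pos ℓ with hℓ | hℓ
    · subst hℓ
      rw [if_pos rfl]
      have hemp : ¬((s:ℤ) + 1 - ((0:ℕ):ℤ) + ((0:ℕ):ℤ) ≤ (s:ℤ)) := by push_cast; omega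
      rw [Finset.Icc_eq_empty hemp]
      simp
    · rw [if_neg hℓ.ne']
      rw [powerset_sum_zero q 0 ℓ hℓ, mul_zero]
  · -- recursion step
    intro n s hn hs ℓ
    obtain ⟨m, rfl⟩ : ∃ m, n = m + 1 := ⟨n - 1, by omega⟩
    obtain ⟨t, rfl⟩ : ∃ t, s = t + 1 := ⟨s - 1, by omega⟩
    simp only [Nat.add_sub_cancel]
    rcases ℓ with _ | k
    · -- case `ℓ = 0`
      simp only [if_pos rfl, mul_zero, add_zero]
      simp only [thresholdPMF]
      push_cast
      simp only [mul_zero, zero_add, add_zero, zpow_zero, one_mul, Finset.powersetCard_zero,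
        Finset.sum_singleton, Finset.sum_empty, pow_zero, mul_one]
      have hIcc : Finset.Icc ((t:ℤ) + 1 + 1 - ((m:ℤ) + 1)) ((t:ℤ) + 1) =
          insert ((t:ℤ) + 1) (Finset.Icc ((t:ℤ) + 1 - ↑m) (t:ℤ)) := by
        ext x
        simp only [Finset.mem_Icc, Finset.mem_insert]
        omega
      have hnm : ((t:ℤ) + 1) ∉ Finset.Icc ((t:ℤ) + 1 - ↑m) (t:ℤ) := by simp
      have hpow : q ^ ((t:ℤ) + 1) = q ^ (t + 1) := by
        rw [← zpow_natCast q (t + 1)]; norm_num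
      rw [hIcc, Finset.prod_insert hnm, hpow]
    · -- case `ℓ = k + 1`
      rw [if_neg (Nat.succ_ne_zero k)]
      simp only [thresholdPMF, Nat.add_sub_cancel]
      push_cast
      rw [pascal_sum]
      rw [show ((t:ℤ) + 1 - ((m:ℤ) + 1)) * ((k:ℤ) + 1) = ((t:ℤ) - ↑m) * ((k:ℤ) + 1) from by ring]
      rw [show ((t:ℤ) + 1 + 1 - ((m:ℤ) + 1) + ((k:ℤ) + 1)) = ((t:ℤ) + 1 + 1 - ↑m + ↑k) from by
        ring]
      set D := ((k:ℤ) + 1) * ((k:ℤ) + 1 + 1) / 2 with hD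
      set E := ((t:ℤ) - ↑m) * ((k:ℤ) + 1) + D with hE
      set E3 := ((t:ℤ) + 1 - ↑m) * ↑k + (k:ℤ) * ((k:ℤ) + 1) / 2 with hE3
      set P := ∏ x ∈ Finset.Icc ((t:ℤ) + 1 + 1 - ↑m + ↑k) ((t:ℤ) + 1), (1 - q ^ x) with hP
      set P2 := ∏ x ∈ Finset.Icc ((t:ℤ) + 1 - ↑m + ((k:ℤ) + 1)) (t:ℤ), (1 - q ^ x) with hP2
      set Sa := ∑ A ∈ Finset.powersetCard (k + 1) (Finset.Icc 1 m), q ^ (∑ a ∈ A, (a - 1))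
        with hSa
      set Sb := ∑ A ∈ Finset.powersetCard k (Finset.Icc 1 m), q ^ (∑ a ∈ A, (a - 1)) with hSb
      have hA : q ^ E * P * Sa = (1 - q ^ (t + 1)) * (q ^ E * P2 * Sa) := by
        rcases le_or_gt (k + 1) m with hkm | hkm
        · have hIcc : Finset.Icc ((t:ℤ) + 1 + 1 - ↑m + ↑k) ((t:ℤ) + 1) =
              insert ((t:ℤ) + 1) (Finset.Icc ((t:ℤ) + 1 - ↑m + ((k:ℤ) + 1)) (t:ℤ)) := by
            ext x
            simp only [Finset.mem_Icc, Finset.mem_insert]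
            omega
          have hnm : ((t:ℤ) + 1) ∉ Finset.Icc ((t:ℤ) + 1 - ↑m + ((k:ℤ) + 1)) (t:ℤ) := by
            simp
          have hpow : q ^ ((t:ℤ) + 1) = q ^ (t + 1) := by
            rw [← zpow_natCast q (t + 1)]; norm_num
          rw [hP, hIcc, Finset.prod_insert hnm, hpow, ← hP2]
          ring
        · rw [hSa, powerset_sum_zero q m (k + 1) hkm, mul_zero, mul_zero, mul_zero]
      have hB := exp_combine' q m t k
      rw [← hD, ← hE, ← hE3] at hB
      linear_combination hA - P * Sb * hB
end

section
/- Let (q_n) be a sequence in [0,1) with q_n → 0 and n·q_n → λ ∈ [0,∞). For each n let R_n be a sum of n-1 independent Bernoulli random variables where the k-th (for 2 ≤ k ≤ n) has success probability (1-q_n)/(1-q_n^k). Then n-1-R_n converges in distribution to a Poisson(λ) random variable. -/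
open Finset MeasureTheory Filter


lemma aux1 (m r : ℝ) (hm : 0 ≤ m) (hr : 0 ≤ r) :
    ∀ j : ℕ, m^(j+1) + ((j:ℝ)+1)*r*m^j ≤ (m+r)^(j+1) := by
  intro j
  induction j with
  | zero => simp
  | succ j ih =>
      have h3 : (m+r)*(m^(j+1) + ((j:ℝ)+1)*r*m^j) ≤ (m+r)*(m+r)^(j+1) :=
        mul_le_mul_of_nonneg_left ih (by linarith)
      have hk : (0:ℝ) ≤ ((j:ℝ)+1)*(r^2*m^j) := by positivity
      have expand : (m+r)*(m^(j+1) + ((j:ℝ)+1)*r*m^j)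
          = m^(j+1+1) + (((j:ℝ)+1)+1)*r*m^(j+1) + ((j:ℝ)+1)*(r^2*m^j) := by ring
      push_cast
      calc m^(j+1+1) + (((j:ℝ)+1)+1)*r*m^(j+1)
          ≤ (m+r)*(m^(j+1) + ((j:ℝ)+1)*r*m^j) := by rw [expand]; linarith
        _ ≤ (m+r)*(m+r)^(j+1) := h3
        _ = (m+r)^(j+1+1) := by ring

lemma aux2 (m r : ℝ) (hm : 0 ≤ m) (hr : 0 ≤ r) :
    ∀ j : ℕ, (m+r)^(j+1) ≤ m^(j+1) + ((j:ℝ)+1)*r*m^j + ((j:ℝ)+1)^2*r^2*(m+r+1)^j := by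
  intro j
  induction j with
  | zero => push_cast; ring_nf; nlinarith [sq_nonneg r]
  | succ j ih =>
      have h1 : (0:ℝ) ≤ m^j := pow_nonneg hm j
      have hb : (1:ℝ) ≤ m+r+1 := by linarith
      have hb0 : (0:ℝ) ≤ m+r+1 := by linarith
      have hBj : (0:ℝ) ≤ (m+r+1)^j := pow_nonneg hb0 j
      have h4 : m^j ≤ (m+r+1)^j := pow_le_pow_left₀ hm (by linarith) j
      have h5 : (m+r+1)^j ≤ (m+r+1)^(j+1) := pow_le_pow_right₀ hb (Nat.le_succ j)
      have h6 : (m+r)*(m+r+1)^j ≤ (m+r+1)^(j+1) := by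
        calc (m+r)*(m+r+1)^j ≤ (m+r+1)*(m+r+1)^j :=
              mul_le_mul_of_nonneg_right (by linarith) hBj
          _ = (m+r+1)^(j+1) := by ring
      have h3 : (m+r)*((m+r)^(j+1)) ≤ (m+r)*(m^(j+1) + ((j:ℝ)+1)*r*m^j + ((j:ℝ)+1)^2*r^2*(m+r+1)^j) :=
        mul_le_mul_of_nonneg_left ih (by linarith)
      have k1 : ((j:ℝ)+1)^2*r^2*((m+r)*(m+r+1)^j) ≤ ((j:ℝ)+1)^2*r^2*(m+r+1)^(j+1) :=
        mul_le_mul_of_nonneg_left h6 (by positivity)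
      have k2 : ((j:ℝ)+1)*(r^2*m^j) ≤ ((j:ℝ)+1)*(r^2*(m+r+1)^(j+1)) := by
        apply mul_le_mul_of_nonneg_left _ (by positivity)
        exact mul_le_mul_of_nonneg_left (h4.trans h5) (sq_nonneg r)
      have k4 : (0:ℝ) ≤ ((j:ℝ)+2)*(r^2*(m+r+1)^(j+1)) := by positivity
      have expand : (m+r)*(m^(j+1) + ((j:ℝ)+1)*r*m^j + ((j:ℝ)+1)^2*r^2*(m+r+1)^j)
          = m^(j+1+1) + (((j:ℝ)+1)+1)*r*m^(j+1) + ((j:ℝ)+1)*(r^2*m^j)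
            + ((j:ℝ)+1)^2*r^2*((m+r)*(m+r+1)^j) := by ring
      have key : ((j:ℝ)+1)*(r^2*(m+r+1)^(j+1)) + ((j:ℝ)+1)^2*r^2*(m+r+1)^(j+1)
          ≤ (((j:ℝ)+1)+1)^2*r^2*(m+r+1)^(j+1) := by nlinarith [k4]
      push_cast
      calc (m+r)^(j+1+1) = (m+r)*((m+r)^(j+1)) := by ring
        _ ≤ (m+r)*(m^(j+1) + ((j:ℝ)+1)*r*m^j + ((j:ℝ)+1)^2*r^2*(m+r+1)^j) := h3
        _ = m^(j+1+1) + (((j:ℝ)+1)+1)*r*m^(j+1) + ((j:ℝ)+1)*(r^2*m^j)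
            + ((j:ℝ)+1)^2*r^2*((m+r)*(m+r+1)^j) := expand
        _ ≤ m^(j+1+1) + (((j:ℝ)+1)+1)*r*m^(j+1) + (((j:ℝ)+1)+1)^2*r^2*(m+r+1)^(j+1) := by
            linarith [k1, k2, key]

noncomputable def esum (j : ℕ) (s : Finset ℕ) (p : ℕ → ℝ) : ℝ :=
  ∑ T ∈ s.powersetCard j, ∏ k ∈ T, p k

lemma esum_zero (s : Finset ℕ) (p : ℕ → ℝ) : esum 0 s p = 1 := by
  simp [esum, Finset.powersetCard_zero]

lemma esum_empty (j : ℕ) (p : ℕ → ℝ) (hj : j ≠ 0) : esum j ∅ p = 0 := by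
  have h : (∅ : Finset ℕ).powersetCard j = ∅ :=
    Finset.powersetCard_eq_empty.2 (by simp only [Finset.card_empty]; omega)
  simp [esum, h]

lemma esum_insert {a : ℕ} {s : Finset ℕ} (ha : a ∉ s) (j : ℕ) (p : ℕ → ℝ) :
    esum (j+1) (insert a s) p = esum (j+1) s p + p a * esum j s p := by
  unfold esum
  rw [Finset.powersetCard_succ_insert ha, Finset.sum_union, Finset.sum_image, Finset.mul_sum]
  · congr 1
    apply Finset.sum_congr rfl
    intro T hT
    rw [Finset.mem_powersetCard] at hT
    rw [Finset.prod_insert (fun h => ha (hT.1 h))]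
  · intro T hT U hU h
    rw [Finset.mem_coe, Finset.mem_powersetCard] at hT hU
    have haT : a ∉ T := fun h => ha (hT.1 h)
    have haU : a ∉ U := fun h => ha (hU.1 h)
    rw [← Finset.erase_insert haT, ← Finset.erase_insert haU, h]
  · rw [Finset.disjoint_right]
    intro T hT hT'
    rw [Finset.mem_image] at hT
    rw [Finset.mem_powersetCard] at hT'
    obtain ⟨U, _, rfl⟩ := hT
    exact ha (hT'.1 (Finset.mem_insert_self a U))

lemma esum_nonneg (j : ℕ) (s : Finset ℕ) (p : ℕ → ℝ) (hp : ∀ k ∈ s, 0 ≤ p k) :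
    0 ≤ esum j s p := by
  apply Finset.sum_nonneg
  intro T hT
  rw [Finset.mem_powersetCard] at hT
  exact Finset.prod_nonneg fun k hk => hp k (hT.1 hk)

lemma esum_le (p : ℕ → ℝ) :
    ∀ (s : Finset ℕ), (∀ k ∈ s, 0 ≤ p k) → ∀ j : ℕ,
      (j.factorial : ℝ) * esum j s p ≤ (∑ k ∈ s, p k)^j := by
  intro s
  induction s using Finset.induction_on with
  | empty =>
      intro _ j
      cases j with
      | zero => simp [esum_zero]
      | succ j => simp [esum_empty _ _ (Nat.succ_ne_zero j)]
  | insert _ _ ha ih =>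
      rename_i a s
      intro hp j
      have hpa : 0 ≤ p a := hp a (Finset.mem_insert_self a s)
      have hps : ∀ k ∈ s, 0 ≤ p k := fun k hk => hp k (Finset.mem_insert_of_mem hk)
      have hm : 0 ≤ ∑ k ∈ s, p k := Finset.sum_nonneg hps
      cases j with
      | zero => simp [esum_zero]
      | succ j =>
          rw [esum_insert ha, Finset.sum_insert ha]
          set m := ∑ k ∈ s, p k with hmdef
          have i1 : ((j+1).factorial : ℝ) * esum (j+1) s p ≤ m^(j+1) := ih hps (j+1)
          have i2 : (j.factorial : ℝ) * esum j s p ≤ m^j := ih hps j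
          have i2' : p a * ((j.factorial : ℝ) * esum j s p) ≤ p a * m^j :=
            mul_le_mul_of_nonneg_left i2 hpa
          have key := aux1 m (p a) hm hpa j
          have e : ((j+1).factorial : ℝ) = ((j:ℝ)+1) * (j.factorial : ℝ) := by
            rw [Nat.factorial_succ]; push_cast; ring
          have goal1 : ((j+1).factorial : ℝ) * (esum (j+1) s p + p a * esum j s p)
              = ((j+1).factorial : ℝ) * esum (j+1) s p
                + ((j:ℝ)+1) * (p a * ((j.factorial : ℝ) * esum j s p)) := by
            rw [e]; ring
          rw [goal1]
          have : ((j:ℝ)+1) * (p a * ((j.factorial:ℝ) * esum j s p)) ≤ ((j:ℝ)+1) * (p a * m^j) :=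
            mul_le_mul_of_nonneg_left i2' (by positivity)
          calc ((j+1).factorial : ℝ) * esum (j+1) s p + ((j:ℝ)+1) * (p a * ((j.factorial:ℝ) * esum j s p))
              ≤ m^(j+1) + ((j:ℝ)+1) * (p a) * m^j := by linarith
            _ ≤ (m + p a)^(j+1) := key
            _ = (p a + m)^(j+1) := by ring
noncomputable def Dc : ℕ → ℝ
  | 0 => 0
  | (j+1) => ((j:ℝ)+1) * Dc j + ((j:ℝ)+1)^2

lemma Dc_nonneg : ∀ j, 0 ≤ Dc j
  | 0 => le_refl 0
  | (j+1) => by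
      have := Dc_nonneg j
      unfold Dc
      positivity

lemma envelope (a b : ℝ) (hb : 0 ≤ b) (hab : b ≤ a) (j : ℕ) :
    b^(j+1) + (a - b) * a^j ≤ a^(j+1) := by
  have h1 : b^(j+1) ≤ b * a^j := by
    calc b^(j+1) = b * b^j := by ring
      _ ≤ b * a^j := mul_le_mul_of_nonneg_left (pow_le_pow_left₀ hb hab j) hb
  calc b^(j+1) + (a - b) * a^j ≤ b * a^j + (a - b) * a^j := by linarith
    _ = a^(j+1) := by ring

lemma esum_ge (p : ℕ → ℝ) (ε : ℝ) (hε : 0 ≤ ε) :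
    ∀ (s : Finset ℕ), (∀ k ∈ s, 0 ≤ p k ∧ p k ≤ ε) → ∀ j : ℕ,
      (∑ k ∈ s, p k)^j ≤ (j.factorial : ℝ) * esum j s p
        + Dc j * ε * ((∑ k ∈ s, p k) + 1)^j := by
  intro s
  induction s using Finset.induction_on with
  | empty =>
      intro _ j
      cases j with
      | zero => simp [esum_zero, Dc]
      | succ j =>
          have h0 : (0:ℝ)^(j+1) = 0 := by simp
          simp only [Finset.sum_empty, esum_empty _ _ (Nat.succ_ne_zero j), h0, mul_zero,
            zero_add, one_pow, mul_one]
          exact mul_nonneg (Dc_nonneg _) hε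
  | insert _ _ ha ih =>
      rename_i a s
      intro hp j
      have hpa := hp a (Finset.mem_insert_self a s)
      have hps : ∀ k ∈ s, 0 ≤ p k ∧ p k ≤ ε := fun k hk => hp k (Finset.mem_insert_of_mem hk)
      have hm : 0 ≤ ∑ k ∈ s, p k := Finset.sum_nonneg (fun k hk => (hps k hk).1)
      cases j with
      | zero => simp [esum_zero, Dc]
      | succ j =>
          rw [esum_insert ha, Finset.sum_insert ha]
          set m := ∑ k ∈ s, p k with hmdef
          set r := p a with hrdef
          have hr : 0 ≤ r := hpa.1
          have hrε : r ≤ ε := hpa.2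
          -- aux2 : (m+r)^(j+1) ≤ m^(j+1) + (j+1) r m^j + (j+1)^2 r^2 (m+r+1)^j
          have A2 : (r + m)^(j+1) ≤ m^(j+1) + ((j:ℝ)+1)*r*m^j + ((j:ℝ)+1)^2*r^2*(m+r+1)^j := by
            have := aux2 m r hm hr j
            calc (r+m)^(j+1) = (m+r)^(j+1) := by ring_nf
              _ ≤ _ := this
          have i1 : m^(j+1) ≤ ((j+1).factorial : ℝ) * esum (j+1) s p + Dc (j+1) * ε * (m+1)^(j+1) :=
            ih hps (j+1)
          have i2 : m^j ≤ (j.factorial : ℝ) * esum j s p + Dc j * ε * (m+1)^j := ih hps j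
          have hbase : (0:ℝ) ≤ m + 1 := by linarith
          have henv : (m+1)^(j+1) + r * (m+r+1)^j ≤ (m+r+1)^(j+1) := by
            have := envelope (m+r+1) (m+1) hbase (by linarith) j
            calc (m+1)^(j+1) + r * (m+r+1)^j
                = (m+1)^(j+1) + ((m+r+1) - (m+1)) * (m+r+1)^j := by ring_nf
              _ ≤ (m+r+1)^(j+1) := this
          have hmono : (m+1)^j ≤ (m+r+1)^j := pow_le_pow_left₀ hbase (by linarith) j
          have hBj : (0:ℝ) ≤ (m+r+1)^j := pow_nonneg (by linarith) j
          -- multiply i2 by (j+1) r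
          have i2' : ((j:ℝ)+1)*r*m^j
              ≤ ((j:ℝ)+1)*r*((j.factorial : ℝ) * esum j s p) + ((j:ℝ)+1)*r*(Dc j * ε * (m+1)^j) := by
            have := mul_le_mul_of_nonneg_left i2 (show (0:ℝ) ≤ ((j:ℝ)+1)*r by positivity)
            calc ((j:ℝ)+1)*r*m^j ≤ ((j:ℝ)+1)*r*((j.factorial : ℝ) * esum j s p + Dc j * ε * (m+1)^j) := this
              _ = _ := by ring
          have hr2 : ((j:ℝ)+1)^2*r^2*(m+r+1)^j ≤ ((j:ℝ)+1)^2*(r*ε)*(m+r+1)^j := by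
            apply mul_le_mul_of_nonneg_right _ hBj
            have : r^2 ≤ r*ε := by nlinarith
            nlinarith [this, sq_nonneg ((j:ℝ)+1)]
          -- error absorption
          have absorb : Dc (j+1) * ε * (m+1)^(j+1) + ((j:ℝ)+1)*r*(Dc j * ε * (m+1)^j)
              + ((j:ℝ)+1)^2*(r*ε)*(m+r+1)^j ≤ Dc (j+1) * ε * (r+m+1)^(j+1) := by
            have hD : Dc (j+1) = ((j:ℝ)+1) * Dc j + ((j:ℝ)+1)^2 := rfl
            have t1 : ((j:ℝ)+1)*r*(Dc j * ε * (m+1)^j) ≤ ((j:ℝ)+1)*Dc j*(ε*r*(m+r+1)^j) := by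
              have := mul_le_mul_of_nonneg_left hmono
                (show (0:ℝ) ≤ ((j:ℝ)+1)*Dc j*(ε*r) by
                  have := Dc_nonneg j; positivity)
              calc ((j:ℝ)+1)*r*(Dc j * ε * (m+1)^j) = ((j:ℝ)+1)*Dc j*(ε*r)*(m+1)^j := by ring
                _ ≤ ((j:ℝ)+1)*Dc j*(ε*r)*(m+r+1)^j := this
                _ = _ := by ring
            have t2 : Dc (j+1) * ε * (m+1)^(j+1) + Dc (j+1) * ε * (r * (m+r+1)^j)
                ≤ Dc (j+1) * ε * (m+r+1)^(j+1) := by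
              have h := mul_le_mul_of_nonneg_left henv
                (show (0:ℝ) ≤ Dc (j+1) * ε by exact mul_nonneg (Dc_nonneg _) hε)
              calc Dc (j+1) * ε * (m+1)^(j+1) + Dc (j+1) * ε * (r * (m+r+1)^j)
                  = Dc (j+1) * ε * ((m+1)^(j+1) + r * (m+r+1)^j) := by ring
                _ ≤ Dc (j+1) * ε * (m+r+1)^(j+1) := h
            have t3 : ((j:ℝ)+1)*Dc j*(ε*r*(m+r+1)^j) + ((j:ℝ)+1)^2*(r*ε)*(m+r+1)^j
                = Dc (j+1) * ε * (r * (m+r+1)^j) := by rw [hD]; ring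
            have e4 : (r+m+1)^(j+1) = (m+r+1)^(j+1) := by ring_nf
            rw [e4]
            linarith [t1, t2]
          -- combine
          have e : ((j+1).factorial : ℝ) = ((j:ℝ)+1) * (j.factorial : ℝ) := by
            rw [Nat.factorial_succ]; push_cast; ring
          have efin : ((j+1).factorial : ℝ) * (esum (j+1) s p + r * esum j s p)
              = ((j+1).factorial : ℝ) * esum (j+1) s p
                + ((j:ℝ)+1)*r*((j.factorial : ℝ) * esum j s p) := by rw [e]; ring
          rw [efin]
          calc (r + m)^(j+1)
              ≤ m^(j+1) + ((j:ℝ)+1)*r*m^j + ((j:ℝ)+1)^2*r^2*(m+r+1)^j := A2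
            _ ≤ ((j+1).factorial : ℝ) * esum (j+1) s p + Dc (j+1) * ε * (m+1)^(j+1)
                + (((j:ℝ)+1)*r*((j.factorial : ℝ) * esum j s p) + ((j:ℝ)+1)*r*(Dc j * ε * (m+1)^j))
                + ((j:ℝ)+1)^2*(r*ε)*(m+r+1)^j := by linarith [i1, i2', hr2]
            _ ≤ ((j+1).factorial : ℝ) * esum (j+1) s p
                + ((j:ℝ)+1)*r*((j.factorial : ℝ) * esum j s p) + Dc (j+1) * ε * (r+m+1)^(j+1) := by
                linarith [absorb]
open MeasureTheory in
lemma prob_card_eq {Ω : Type*} [MeasurableSpace Ω] (ℙ : Measure Ω) [IsProbabilityMeasure ℙ]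
    (Y : ℕ → Ω → ℕ) (hmeas : ∀ k, Measurable (Y k)) (hval : ∀ k ω, Y k ω ≤ 1)
    (hindep : ProbabilityTheory.iIndepFun Y ℙ)
    (I : Finset ℕ) (pr : ℕ → ℝ) (hpr0 : ∀ k ∈ I, 0 ≤ pr k) (hpr1 : ∀ k ∈ I, pr k ≤ 1)
    (hbern : ∀ k ∈ I, ℙ {ω | Y k ω = 1} = ENNReal.ofReal (pr k)) (j : ℕ) :
    ℙ {ω | (I.filter (fun k => Y k ω = 0)).card = j}
      = ENNReal.ofReal (∑ S ∈ I.powersetCard j,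
          (∏ k ∈ S, (1 - pr k)) * ∏ k ∈ I \ S, pr k) := by
  classical
  set E : Finset ℕ → Set Ω :=
    fun S => ⋂ k ∈ I, Y k ⁻¹' {(if k ∈ S then 0 else 1 : ℕ)} with hE
  -- step 1 : set identity
  have hset : {ω | (I.filter (fun k => Y k ω = 0)).card = j}
      = ⋃ S ∈ I.powersetCard j, E S := by
    ext ω
    simp only [Set.mem_setOf_eq, Set.mem_iUnion, hE, Set.mem_iInter, Set.mem_preimage,
      Set.mem_singleton_iff]
    constructor
    · intro h
      refine ⟨I.filter (fun k => Y k ω = 0), ?_, ?_⟩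
      · rw [Finset.mem_powersetCard]; exact ⟨Finset.filter_subset _ _, h⟩
      · intro k hk
        by_cases h0 : Y k ω = 0
        · simp [Finset.mem_filter, hk, h0]
        · have h1 : Y k ω = 1 := by have := hval k ω; omega
          simp [Finset.mem_filter, hk, h0, h1]
    · rintro ⟨S, hS, hSω⟩
      rw [Finset.mem_powersetCard] at hS
      have : I.filter (fun k => Y k ω = 0) = S := by
        ext k
        simp only [Finset.mem_filter]
        constructor
        · rintro ⟨hkI, hk0⟩
          by_contra hkS
          have := hSω k hkI
          rw [if_neg hkS] at this
          omega
        · intro hkS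
          have hkI := hS.1 hkS
          have := hSω k hkI
          rw [if_pos hkS] at this
          exact ⟨hkI, this⟩
      rw [this]; exact hS.2
  -- measurability of pieces
  have hmeasE : ∀ S, MeasurableSet (E S) := by
    intro S
    apply MeasurableSet.biInter (Set.to_countable _)
    intro k _
    exact hmeas k (measurableSet_singleton _)
  -- probability of Y k = 0
  have h0 : ∀ k ∈ I, ℙ (Y k ⁻¹' {(0:ℕ)}) = ENNReal.ofReal (1 - pr k) := by
    intro k hk
    have hc : Y k ⁻¹' {(0:ℕ)} = (Y k ⁻¹' {(1:ℕ)})ᶜ := by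
      ext ω
      simp only [Set.mem_preimage, Set.mem_singleton_iff, Set.mem_compl_iff]
      have := hval k ω; omega
    have hpre : ℙ (Y k ⁻¹' {(1:ℕ)}) = ENNReal.ofReal (pr k) := hbern k hk
    rw [hc, measure_compl (hmeas k (measurableSet_singleton 1)) (measure_ne_top _ _),
      measure_univ, hpre]
    rw [ENNReal.ofReal_sub _ (hpr0 k hk), ENNReal.ofReal_one]
  have h1 : ∀ k ∈ I, ℙ (Y k ⁻¹' {(1:ℕ)}) = ENNReal.ofReal (pr k) := by
    intro k hk
    exact hbern k hk
  -- probability of each atom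
  have hatom : ∀ S ∈ I.powersetCard j,
      ℙ (E S) = ENNReal.ofReal ((∏ k ∈ S, (1 - pr k)) * ∏ k ∈ I \ S, pr k) := by
    intro S hS
    rw [Finset.mem_powersetCard] at hS
    have := hindep.measure_inter_preimage_eq_mul (S := I)
      (sets := fun k => {(if k ∈ S then 0 else 1 : ℕ)})
      (fun k _ => measurableSet_singleton _)
    rw [hE]
    rw [this]
    have hsplit : ∏ k ∈ I, ℙ (Y k ⁻¹' {(if k ∈ S then 0 else 1 : ℕ)})
        = (∏ k ∈ S, ℙ (Y k ⁻¹' {(0:ℕ)})) * ∏ k ∈ I \ S, ℙ (Y k ⁻¹' {(1:ℕ)}) := by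
      rw [← Finset.prod_sdiff hS.1]
      rw [mul_comm]
      congr 1
      · apply Finset.prod_congr rfl
        intro k hk
        rw [if_pos hk]
      · apply Finset.prod_congr rfl
        intro k hk
        rw [Finset.mem_sdiff] at hk
        rw [if_neg hk.2]
    rw [hsplit]
    rw [Finset.prod_congr rfl (fun k hk => h0 k (hS.1 hk)),
      Finset.prod_congr rfl (fun k hk => h1 k (Finset.mem_sdiff.mp hk).1)]
    rw [← ENNReal.ofReal_prod_of_nonneg (fun k hk => by linarith [hpr1 k (hS.1 hk)]),
      ← ENNReal.ofReal_prod_of_nonneg (fun k hk => hpr0 k (Finset.mem_sdiff.mp hk).1),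
      ← ENNReal.ofReal_mul (Finset.prod_nonneg (fun k hk => by linarith [hpr1 k (hS.1 hk)]))]
  -- disjointness
  have hdisj : (↑(I.powersetCard j) : Set (Finset ℕ)).PairwiseDisjoint E := by
    intro S hS T hT hne
    simp only [Finset.coe_sort_coe, Finset.mem_coe, Finset.mem_powersetCard] at hS hT
    have hex : ∃ k ∈ S, k ∉ T := by
      by_contra hc
      push_neg at hc
      exact hne (Finset.eq_of_subset_of_card_le hc (hT.2.trans hS.2.symm).le)
    obtain ⟨k, hkS, hkT⟩ := hex
    have hkI : k ∈ I := hS.1 hkS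
    simp only [Function.onFun]
    rw [Set.disjoint_left]
    intro ω hωS hωT
    rw [hE] at hωS hωT
    simp only [Set.mem_iInter, Set.mem_preimage, Set.mem_singleton_iff] at hωS hωT
    have e1 := hωS k hkI
    have e2 := hωT k hkI
    rw [if_pos hkS] at e1
    rw [if_neg hkT] at e2
    omega
  rw [hset, measure_biUnion_finset hdisj (fun S _ => hmeasE S)]
  rw [Finset.sum_congr rfl hatom]
  rw [ENNReal.ofReal_sum_of_nonneg]
  intro S hS
  rw [Finset.mem_powersetCard] at hS
  exact mul_nonneg (Finset.prod_nonneg (fun k hk => by linarith [hpr1 k (hS.1 hk)]))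
    (Finset.prod_nonneg (fun k hk => hpr0 k (Finset.mem_sdiff.mp hk).1))
lemma prod_one_sub_le_exp (s : Finset ℕ) (p : ℕ → ℝ) (hp : ∀ k ∈ s, 0 ≤ p k ∧ p k ≤ 1) :
    ∏ k ∈ s, (1 - p k) ≤ Real.exp (-∑ k ∈ s, p k) := by
  have h : ∏ k ∈ s, (1 - p k) ≤ ∏ k ∈ s, Real.exp (-(p k)) := by
    apply Finset.prod_le_prod
    · intro k hk; linarith [(hp k hk).2]
    · intro k hk; linarith [Real.add_one_le_exp (-(p k))]
  calc ∏ k ∈ s, (1 - p k) ≤ ∏ k ∈ s, Real.exp (-(p k)) := h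
    _ = Real.exp (∑ k ∈ s, -(p k)) := (Real.exp_sum s _).symm
    _ = Real.exp (-∑ k ∈ s, p k) := by rw [Finset.sum_neg_distrib]

lemma exp_le_prod_one_sub (s : Finset ℕ) (p : ℕ → ℝ) (ε : ℝ) (hε1 : ε < 1)
    (hp : ∀ k ∈ s, 0 ≤ p k ∧ p k ≤ ε) :
    Real.exp (-(∑ k ∈ s, p k) / (1 - ε)) ≤ ∏ k ∈ s, (1 - p k) := by
  have key : ∀ k ∈ s, Real.exp (-(p k / (1 - ε))) ≤ 1 - p k := by
    intro k hk
    obtain ⟨h0, h1⟩ := hp k hk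
    have hεd : (0:ℝ) < 1 - ε := by linarith
    have hpd : (0:ℝ) < 1 - p k := by linarith
    have h2 : 1 + p k / (1 - ε) ≤ Real.exp (p k / (1 - ε)) := by
      linarith [Real.add_one_le_exp (p k / (1 - ε))]
    have h3 : (1 - p k)⁻¹ ≤ 1 + p k / (1 - ε) := by
      rw [inv_le_iff_one_le_mul₀ hpd]
      have e : (1 + p k / (1-ε)) * (1 - p k) = ((1-ε) + p k * (ε - p k)) / (1-ε) := by
        field_simp; ring
      rw [e]
      rw [le_div_iff₀ hεd]
      nlinarith [mul_nonneg h0 (by linarith : (0:ℝ) ≤ ε - p k)]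
    have h4 : (1 - p k)⁻¹ ≤ Real.exp (p k / (1 - ε)) := h3.trans h2
    have h5 : (Real.exp (p k / (1 - ε)))⁻¹ ≤ ((1 - p k)⁻¹)⁻¹ :=
      inv_anti₀ (by positivity) h4
    rw [inv_inv] at h5
    rw [Real.exp_neg]
    exact h5
  have h : ∏ k ∈ s, Real.exp (-(p k / (1 - ε))) ≤ ∏ k ∈ s, (1 - p k) := by
    apply Finset.prod_le_prod
    · intro k _; positivity
    · exact key
  calc Real.exp (-(∑ k ∈ s, p k) / (1 - ε))
      = Real.exp (∑ k ∈ s, -(p k / (1 - ε))) := by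
        congr 1
        rw [Finset.sum_neg_distrib, ← Finset.sum_div, neg_div]
    _ = ∏ k ∈ s, Real.exp (-(p k / (1 - ε))) := Real.exp_sum s _
    _ ≤ ∏ k ∈ s, (1 - p k) := h

lemma pbounds (qn : ℝ) (h0 : 0 ≤ qn) (h1 : qn < 1) (k : ℕ) (hk : 2 ≤ k) :
    0 ≤ 1 - (1-qn)/(1-qn^k) ∧ 1 - (1-qn)/(1-qn^k) ≤ qn/(1-qn)
      ∧ qn - qn^2 ≤ 1 - (1-qn)/(1-qn^k)
      ∧ (1-qn)/(1-qn^k) ≤ 1 ∧ 0 ≤ (1-qn)/(1-qn^k) := by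
  have hdk : (0:ℝ) < 1 - qn^k := by
    have : qn^k < 1 := pow_lt_one₀ h0 h1 (by omega)
    linarith
  have hq : (0:ℝ) < 1 - qn := by linarith
  have hk1 : qn^k ≤ qn := pow_le_of_le_one h0 h1.le (by omega)
  have hk2 : qn^k ≤ qn^2 := pow_le_pow_of_le_one h0 h1.le hk
  have hkn : 0 ≤ qn^k := pow_nonneg h0 k
  have hr1 : (1-qn)/(1-qn^k) ≤ 1 := by
    rw [div_le_one hdk]; linarith
  have hr0 : 0 ≤ (1-qn)/(1-qn^k) := div_nonneg (by linarith) hdk.le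
  have hpeq : 1 - (1-qn)/(1-qn^k) = (qn - qn^k)/(1-qn^k) := by
    field_simp
    ring
  refine ⟨by linarith, ?_, ?_, hr1, hr0⟩
  · rw [hpeq]
    exact div_le_div₀ h0 (by linarith) hq (by linarith)
  · rw [hpeq]
    have step1 : qn - qn^k ≤ (qn - qn^k)/(1-qn^k) := by
      rw [le_div_iff₀ hdk]
      have : (qn - qn^k)*(1-qn^k) ≤ (qn - qn^k)*1 :=
        mul_le_mul_of_nonneg_left (by linarith) (by linarith)
      linarith
    linarith
lemma sandwich_P (I : Finset ℕ) (p : ℕ → ℝ) (ε : ℝ) (hε1 : ε < 1)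
    (hp : ∀ k ∈ I, 0 ≤ p k ∧ p k ≤ ε) (j : ℕ) :
    (∏ k ∈ I, (1 - p k)) * esum j I p
      ≤ ∑ S ∈ I.powersetCard j, (∏ k ∈ S, p k) * ∏ k ∈ I \ S, (1 - p k)
    ∧ ∑ S ∈ I.powersetCard j, (∏ k ∈ S, p k) * ∏ k ∈ I \ S, (1 - p k)
      ≤ (∏ k ∈ I, (1 - p k)) * esum j I p / (1-ε)^j := by
  have hεp : (0:ℝ) < (1-ε)^j := pow_pos (by linarith) j
  have key : ∀ S ∈ I.powersetCard j,
      (∏ k ∈ I, (1 - p k)) ≤ ∏ k ∈ I \ S, (1 - p k)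
        ∧ ∏ k ∈ I \ S, (1 - p k) ≤ (∏ k ∈ I, (1 - p k)) / (1-ε)^j := by
    intro S hS
    rw [Finset.mem_powersetCard] at hS
    have hsplit : (∏ k ∈ I \ S, (1 - p k)) * ∏ k ∈ S, (1 - p k)
        = ∏ k ∈ I, (1 - p k) := Finset.prod_sdiff hS.1
    have hnn : ∀ k ∈ I, 0 ≤ 1 - p k := by
      intro k hk; have := (hp k hk).2; linarith
    have h3S : 0 ≤ ∏ k ∈ I \ S, (1 - p k) :=
      Finset.prod_nonneg (fun k hk => hnn k (Finset.mem_sdiff.mp hk).1)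
    have h1S : ∏ k ∈ S, (1 - p k) ≤ 1 := by
      apply Finset.prod_le_one
      · intro k hk; exact hnn k (hS.1 hk)
      · intro k hk; have := (hp k (hS.1 hk)).1; linarith
    have h2S : (1-ε)^j ≤ ∏ k ∈ S, (1 - p k) := by
      have : ∏ k ∈ S, (1-ε) ≤ ∏ k ∈ S, (1 - p k) := by
        apply Finset.prod_le_prod
        · intro k _; linarith
        · intro k hk; have := (hp k (hS.1 hk)).2; linarith
      rwa [Finset.prod_const, hS.2] at this
    constructor
    · calc ∏ k ∈ I, (1 - p k) = (∏ k ∈ I \ S, (1 - p k)) * ∏ k ∈ S, (1 - p k) := hsplit.symm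
        _ ≤ (∏ k ∈ I \ S, (1 - p k)) * 1 := mul_le_mul_of_nonneg_left h1S h3S
        _ = ∏ k ∈ I \ S, (1 - p k) := mul_one _
    · rw [le_div_iff₀ hεp]
      calc (∏ k ∈ I \ S, (1 - p k)) * (1-ε)^j
          ≤ (∏ k ∈ I \ S, (1 - p k)) * ∏ k ∈ S, (1 - p k) :=
            mul_le_mul_of_nonneg_left h2S h3S
        _ = ∏ k ∈ I, (1 - p k) := hsplit
  have hpS : ∀ S ∈ I.powersetCard j, 0 ≤ ∏ k ∈ S, p k := by
    intro S hS
    rw [Finset.mem_powersetCard] at hS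
    exact Finset.prod_nonneg (fun k hk => (hp k (hS.1 hk)).1)
  constructor
  · rw [mul_comm, esum, Finset.sum_mul]
    apply Finset.sum_le_sum
    intro S hS
    exact mul_le_mul_of_nonneg_left (key S hS).1 (hpS S hS)
  · rw [div_eq_mul_inv, mul_comm (∏ k ∈ I, (1 - p k)), mul_assoc, esum, Finset.sum_mul]
    apply Finset.sum_le_sum
    intro S hS
    calc (∏ k ∈ S, p k) * ∏ k ∈ I \ S, (1 - p k)
        ≤ (∏ k ∈ S, p k) * ((∏ k ∈ I, (1 - p k)) / (1-ε)^j) :=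
          mul_le_mul_of_nonneg_left (key S hS).2 (hpS S hS)
      _ = (∏ k ∈ S, p k) * ((∏ k ∈ I, (1 - p k)) * ((1-ε)^j)⁻¹) := by rw [div_eq_mul_inv]

/-- Poisson limit: if `q_n → 0`, `n q_n → λ`, and `R_n = Σ_{k=2}^n X_{n,k}` is a
sum of independent Bernoulli variables with `P(X_{n,k}=1) = (1-q_n)/(1-q_nᵏ)`,
then `n-1-R_n` converges in distribution to `Poisson(λ)`, i.e. its point
probabilities converge to `e^{-λ} λʲ/j!`. -/
theorem poisson_limit_right_depth
    (q : ℕ → ℝ) (hq01 : ∀ n, q n ∈ Set.Ico (0 : ℝ) 1)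
    (hq0 : Tendsto q atTop (nhds 0))
    (lam : ℝ) (hlam : 0 ≤ lam)
    (hnq : Tendsto (fun n : ℕ => (n : ℝ) * q n) atTop (nhds lam))
    {Ω : Type*} [MeasurableSpace Ω] (ℙ : Measure Ω) [IsProbabilityMeasure ℙ]
    (X : ℕ → ℕ → Ω → ℕ)
    (hmeas : ∀ n k, Measurable (X n k))
    (hval : ∀ n k ω, X n k ω ≤ 1)
    (hindep : ∀ n, ProbabilityTheory.iIndepFun
      (fun k => X n k) ℙ)
    (hbern : ∀ n, ∀ k ∈ Finset.Icc 2 n,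
      ℙ {ω | X n k ω = 1} = ENNReal.ofReal ((1 - q n) / (1 - q n ^ k))) :
    ∀ j : ℕ,
      Tendsto
        (fun n => (ℙ {ω | (n - 1) - ∑ k ∈ Finset.Icc 2 n, X n k ω = j}).toReal)
        atTop
        (nhds (Real.exp (-lam) * lam ^ j / (Nat.factorial j : ℝ))) := by
  intro j
  classical
  have hq0n : ∀ n, 0 ≤ q n := fun n => (hq01 n).1
  have hq1n : ∀ n, q n < 1 := fun n => (hq01 n).2
  set p : ℕ → ℕ → ℝ := fun n k => 1 - (1 - q n)/(1 - q n ^ k) with hpdef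
  set ε : ℕ → ℝ := fun n => q n / (1 - q n) with hεdef
  set m : ℕ → ℝ := fun n => ∑ k ∈ Finset.Icc 2 n, p n k with hmdef
  set A : ℕ → ℝ := fun n => ∏ k ∈ Finset.Icc 2 n, (1 - p n k) with hAdef
  set B : ℕ → ℝ := fun n => esum j (Finset.Icc 2 n) (p n) with hBdef
  have hpb : ∀ n, ∀ k ∈ Finset.Icc 2 n,
      0 ≤ p n k ∧ p n k ≤ ε n ∧ q n - (q n)^2 ≤ p n k
        ∧ (1 - q n)/(1 - q n^k) ≤ 1 ∧ 0 ≤ (1 - q n)/(1 - q n^k) := by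
    intro n k hk
    rw [Finset.mem_Icc] at hk
    exact pbounds (q n) (hq0n n) (hq1n n) k hk.1
  have hε0 : ∀ n, 0 ≤ ε n := by
    intro n
    exact div_nonneg (hq0n n) (by linarith [hq1n n])
  have hp01 : ∀ n, ∀ k ∈ Finset.Icc 2 n, 0 ≤ p n k ∧ p n k ≤ 1 := by
    intro n k hk
    obtain ⟨h1, _, _, _, h5⟩ := hpb n k hk
    constructor
    · exact h1
    · show 1 - (1 - q n)/(1 - q n ^ k) ≤ 1
      linarith
  -- identity
  have hPid : ∀ n, (ℙ {ω | (n - 1) - ∑ k ∈ Finset.Icc 2 n, X n k ω = j}).toReal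
      = ∑ S ∈ (Finset.Icc 2 n).powersetCard j,
          (∏ k ∈ S, p n k) * ∏ k ∈ (Finset.Icc 2 n) \ S, (1 - p n k) := by
    intro n
    have hsetEq : {ω | (n - 1) - ∑ k ∈ Finset.Icc 2 n, X n k ω = j}
        = {ω | ((Finset.Icc 2 n).filter (fun k => X n k ω = 0)).card = j} := by
      ext ω
      simp only [Set.mem_setOf_eq]
      have hcard : (Finset.Icc 2 n).card = n + 1 - 2 := Nat.card_Icc 2 n
      have hsplit := Finset.card_filter_add_card_filter_not
        (s := Finset.Icc 2 n) (p := fun k => X n k ω = 0)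
      have hsum : ∑ k ∈ Finset.Icc 2 n, X n k ω
          = ((Finset.Icc 2 n).filter (fun k => ¬ X n k ω = 0)).card := by
        rw [← Finset.sum_filter_add_sum_filter_not (Finset.Icc 2 n) (fun k => X n k ω = 0)]
        have e1 : ∑ k ∈ (Finset.Icc 2 n).filter (fun k => X n k ω = 0), X n k ω = 0 :=
          Finset.sum_eq_zero (fun k hk => (Finset.mem_filter.mp hk).2)
        have e2 : ∑ k ∈ (Finset.Icc 2 n).filter (fun k => ¬ X n k ω = 0), X n k ω
            = ((Finset.Icc 2 n).filter (fun k => ¬ X n k ω = 0)).card := by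
          rw [Finset.card_eq_sum_ones]
          apply Finset.sum_congr rfl
          intro k hk
          have h1 := (Finset.mem_filter.mp hk).2
          have := hval n k ω
          omega
        omega
      omega
    rw [hsetEq]
    rw [prob_card_eq ℙ (fun k => X n k) (hmeas n) (hval n) (hindep n) (Finset.Icc 2 n)
      (fun k => (1 - q n)/(1 - q n ^ k)) (fun k hk => (hpb n k hk).2.2.2.2)
      (fun k hk => (hpb n k hk).2.2.2.1) (hbern n) j]
    rw [ENNReal.toReal_ofReal]
    · apply Finset.sum_congr rfl
      intro S hS
      rw [Finset.mem_powersetCard] at hS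
      have e1 : ∀ k : ℕ, (1:ℝ) - (1 - q n)/(1 - q n ^ k) = p n k := fun k => rfl
      have e2 : ∀ k : ℕ, ((1:ℝ) - q n)/(1 - q n ^ k) = 1 - p n k := fun k => by
        rw [← e1 k]; ring
      rw [Finset.prod_congr rfl (fun k _ => e1 k), Finset.prod_congr rfl (fun k _ => e2 k)]
    · apply Finset.sum_nonneg
      intro S hS
      rw [Finset.mem_powersetCard] at hS
      apply mul_nonneg
      · exact Finset.prod_nonneg (fun k hk => by
          have := (hpb n k (hS.1 hk)).2.2.2.1; linarith)
      · exact Finset.prod_nonneg (fun k hk =>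
          (hpb n k (Finset.mem_sdiff.mp hk).1).2.2.2.2)
  -- limits
  have h1q : Tendsto (fun n => 1 - q n) atTop (nhds 1) := by
    have h : Tendsto (fun n : ℕ => (1:ℝ) - q n) atTop (nhds (1 - 0)) := tendsto_const_nhds.sub hq0
    simpa using h
  have hεlim : Tendsto ε atTop (nhds 0) := by
    have := hq0.div h1q one_ne_zero
    simp at this; exact this
  have hεev : ∀ᶠ n in atTop, ε n < 1 := by
    have hev : ∀ᶠ n in atTop, q n < 1/2 := hq0.eventually_lt_const (by norm_num)
    filter_upwards [hev] with n hn
    rw [hεdef]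
    rw [div_lt_one (by linarith [hq1n n])]
    linarith
  have hmlim : Tendsto m atTop (nhds lam) := by
    have hlo : Tendsto (fun n : ℕ => ((n:ℝ) * q n - q n) * (1 - q n)) atTop (nhds lam) := by
      have := (hnq.sub hq0).mul h1q
      simpa using this
    have hhi : Tendsto (fun n : ℕ => ((n:ℝ) * q n - q n) / (1 - q n)) atTop (nhds lam) := by
      have := (hnq.sub hq0).div h1q one_ne_zero
      simp at this; exact this
    apply tendsto_of_tendsto_of_tendsto_of_le_of_le' hlo hhi
    · filter_upwards [eventually_ge_atTop 1] with n hn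
      have hcard : (((Finset.Icc 2 n).card : ℕ) : ℝ) = (n:ℝ) - 1 := by
        rw [Nat.card_Icc]
        have : n + 1 - 2 = n - 1 := by omega
        rw [this]
        push_cast [hn]
        ring
      have hsum : ∑ k ∈ Finset.Icc 2 n, (q n - (q n)^2) ≤ m n :=
        Finset.sum_le_sum (fun k hk => (hpb n k hk).2.2.1)
      rw [Finset.sum_const, nsmul_eq_mul, hcard] at hsum
      calc ((n:ℝ) * q n - q n) * (1 - q n) = ((n:ℝ) - 1) * (q n - (q n)^2) := by ring
        _ ≤ m n := hsum
    · filter_upwards [eventually_ge_atTop 1] with n hn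
      have hcard : (((Finset.Icc 2 n).card : ℕ) : ℝ) = (n:ℝ) - 1 := by
        rw [Nat.card_Icc]
        have : n + 1 - 2 = n - 1 := by omega
        rw [this]
        push_cast [hn]
        ring
      have hsum : m n ≤ ∑ k ∈ Finset.Icc 2 n, ε n :=
        Finset.sum_le_sum (fun k hk => (hpb n k hk).2.1)
      rw [Finset.sum_const, nsmul_eq_mul, hcard] at hsum
      calc m n ≤ ((n:ℝ) - 1) * ε n := hsum
        _ = ((n:ℝ) * q n - q n) / (1 - q n) := by
            rw [hεdef]
            field_simp
  have hfacne : ((j.factorial : ℝ)) ≠ 0 := by positivity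
  have hfacpos : (0:ℝ) < (j.factorial : ℝ) := by positivity
  have hBlim : Tendsto B atTop (nhds (lam^j / (j.factorial : ℝ))) := by
    have hup : Tendsto (fun n => m n ^ j / (j.factorial : ℝ)) atTop
        (nhds (lam^j / (j.factorial : ℝ))) := (hmlim.pow j).div_const _
    have hlo : Tendsto (fun n => (m n ^ j - Dc j * ε n * (m n + 1)^j) / (j.factorial : ℝ))
        atTop (nhds (lam^j / (j.factorial : ℝ))) := by
      have h2 : Tendsto (fun n => Dc j * ε n * (m n + 1)^j) atTop (nhds 0) := by
        have := ((tendsto_const_nhds (x := Dc j)).mul hεlim).mul ((hmlim.add_const 1).pow j)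
        simpa using this
      have := ((hmlim.pow j).sub h2).div_const ((j.factorial : ℝ))
      simpa using this
    apply tendsto_of_tendsto_of_tendsto_of_le_of_le' hlo hup
    · apply Filter.Eventually.of_forall
      intro n
      have := esum_ge (p n) (ε n) (hε0 n) (Finset.Icc 2 n)
        (fun k hk => ⟨(hpb n k hk).1, (hpb n k hk).2.1⟩) j
      rw [div_le_iff₀ hfacpos]
      rw [hBdef]
      linarith [this]
    · apply Filter.Eventually.of_forall
      intro n
      have := esum_le (p n) (Finset.Icc 2 n) (fun k hk => (hpb n k hk).1) j
      rw [le_div_iff₀ hfacpos]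
      rw [hBdef]
      linarith [this]
  have hAlim : Tendsto A atTop (nhds (Real.exp (-lam))) := by
    have hup : Tendsto (fun n => Real.exp (-(m n))) atTop (nhds (Real.exp (-lam))) :=
      (Real.continuous_exp.tendsto _).comp hmlim.neg
    have hlo : Tendsto (fun n => Real.exp (-(m n) / (1 - ε n))) atTop
        (nhds (Real.exp (-lam))) := by
      have h2 : Tendsto (fun n => -(m n) / (1 - ε n)) atTop (nhds (-lam)) := by
        have h3 : Tendsto (fun n => 1 - ε n) atTop (nhds 1) := by
          have h : Tendsto (fun n : ℕ => (1:ℝ) - ε n) atTop (nhds (1 - 0)) :=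
            tendsto_const_nhds.sub hεlim
          simpa using h
        have := hmlim.neg.div h3 one_ne_zero
        simp at this; exact this
      exact (Real.continuous_exp.tendsto _).comp h2
    apply tendsto_of_tendsto_of_tendsto_of_le_of_le' hlo hup
    · filter_upwards [hεev] with n hn
      exact exp_le_prod_one_sub (Finset.Icc 2 n) (p n) (ε n) hn
        (fun k hk => ⟨(hpb n k hk).1, (hpb n k hk).2.1⟩)
    · apply Filter.Eventually.of_forall
      intro n
      exact prod_one_sub_le_exp (Finset.Icc 2 n) (p n) (hp01 n)
  -- final squeeze
  have hABlim : Tendsto (fun n => A n * B n) atTop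
      (nhds (Real.exp (-lam) * lam ^ j / (j.factorial : ℝ))) := by
    have := hAlim.mul hBlim
    have e : Real.exp (-lam) * (lam ^ j / (j.factorial : ℝ))
        = Real.exp (-lam) * lam ^ j / (j.factorial : ℝ) := by ring
    rwa [e] at this
  have hUlim : Tendsto (fun n => A n * B n / (1 - ε n)^j) atTop
      (nhds (Real.exp (-lam) * lam ^ j / (j.factorial : ℝ))) := by
    have h3 : Tendsto (fun n => (1 - ε n)^j) atTop (nhds 1) := by
      have h4 : Tendsto (fun n => 1 - ε n) atTop (nhds 1) := by
        have h : Tendsto (fun n : ℕ => (1:ℝ) - ε n) atTop (nhds (1 - 0)) :=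
          tendsto_const_nhds.sub hεlim
        simpa using h
      have := h4.pow j
      simpa using this
    have := hABlim.div h3 one_ne_zero
    simp at this; exact this
  apply tendsto_of_tendsto_of_tendsto_of_le_of_le' hABlim hUlim
  · filter_upwards [hεev] with n hn
    rw [hPid n]
    exact (sandwich_P (Finset.Icc 2 n) (p n) (ε n) hn
      (fun k hk => ⟨(hpb n k hk).1, (hpb n k hk).2.1⟩) j).1
  · filter_upwards [hεev] with n hn
    rw [hPid n]
    exact (sandwich_P (Finset.Icc 2 n) (p n) (ε n) hn
      (fun k hk => ⟨(hpb n k hk).1, (hpb n k hk).2.1⟩) j).2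
end
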